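/- Let p be a prime, k a commutative ring with p·1 = 0, R a commutative k-algebra, and M an R-module. Let ∇ be a flat connection on M: an R-linear map ∂ ↦ ∇_∂ from Der_k(R) to the k-linear endomorphisms of M satisfying ∇_∂(r·m) = ∂(r)·m + r·∇_∂(m) and ∇_{[∂,∂']} = ∇_∂ ∘ ∇_{∂'} − ∇_{∂'} ∘ ∇_∂. Define the p-curvature ψ(∂) := (∇_∂)^p − ∇_{∂^p}. Then the p-curvature is horizontal and its values commute: for all ∂, ∂' ∈ Der_k(R), ψ(∂) ∘ ∇_{∂'} = ∇_{∂'} ∘ ψ(∂), and consequently ψ(∂) ∘ ψ(∂') = ψ(∂') ∘ ψ(∂). -/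

import Mathlib

section Aux

variable {p : ℕ}

lemma myAddPow {k A : Type*} [CommRing k] [Ring A] [Algebra k A]
    (hp : p.Prime) (hchar : (p : k) = 0) {a b : A} (h : Commute a b) :
    (a + b) ^ p = a ^ p + b ^ p := by
  obtain ⟨r, hr⟩ := h.exists_add_pow_prime_eq hp
  have hpA : (p : A) = 0 := by
    rw [← map_natCast (algebraMap k A) p, hchar, map_zero]
  rw [hr, hpA, zero_mul, zero_mul, zero_mul, add_zero]

lemma myNegPow {k A : Type*} [CommRing k] [Ring A] [Algebra k A]
    (hp : p.Prime) (hchar : (p : k) = 0) (b : A) : (-b) ^ p = -(b ^ p) := by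
  rcases hp.eq_two_or_odd' with h2 | hodd
  · subst h2
    have hpA : (2 : A) = 0 := by
      rw [← Nat.cast_ofNat, ← map_natCast (algebraMap k A) 2]
      simp only [Nat.cast_ofNat] at hchar ⊢
      rw [hchar, map_zero]
    have : b ^ 2 + b ^ 2 = 0 := by rw [← two_mul, hpA, zero_mul]
    rw [neg_pow, ← eq_neg_of_add_eq_zero_left this]
    rw [neg_one_sq, one_mul]
  · exact hodd.neg_pow b

lemma mySubPow {k A : Type*} [CommRing k] [Ring A] [Algebra k A]
    (hp : p.Prime) (hchar : (p : k) = 0) {a b : A} (h : Commute a b) :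
    (a - b) ^ p = a ^ p - b ^ p := by
  rw [sub_eq_add_neg, myAddPow hp hchar h.neg_right, myNegPow hp hchar, sub_eq_add_neg]

lemma adPow {k A : Type*} [CommRing k] [Ring A] [Algebra k A]
    (hp : p.Prime) (hchar : (p : k) = 0) (a b : A) :
    (fun x => a * x - x * a)^[p] b = a ^ p * b - b * a ^ p := by
  have key : (LinearMap.mulLeft k a - LinearMap.mulRight k a) ^ p
      = LinearMap.mulLeft k (a ^ p) - LinearMap.mulRight k (a ^ p) := by
    rw [mySubPow hp hchar (LinearMap.commute_mulLeft_right a a),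
      LinearMap.pow_mulLeft, LinearMap.pow_mulRight]
  have h1 := congrArg (fun f : Module.End k A => f b) key
  simp only [Module.End.pow_apply, LinearMap.sub_apply, LinearMap.mulLeft_apply,
    LinearMap.mulRight_apply] at h1
  have h2 : ⇑(LinearMap.mulLeft k a - LinearMap.mulRight k a) =
      fun x => a * x - x * a := by
    funext x; simp [LinearMap.sub_apply]
  rw [h2] at h1
  exact h1

end Aux

/-- The `p`-curvature `ψ(∂) = (∇_∂)^p − ∇_{∂^p}` of a flat connection `∇` on an `R`-module
`M` (in characteristic `p`) is horizontal: it commutes with all the operators `∇_{∂'}`,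
and consequently its values pairwise commute. -/
theorem pCurvature_horizontal_and_commute (p : ℕ) (hp : p.Prime)
    (k : Type*) [CommRing k] (R : Type*) [CommRing R] [Algebra k R]
    (hchar : (p : k) = 0)
    (M : Type*) [AddCommGroup M] [Module k M] [Module R M] [IsScalarTower k R M]
    (nabla : Derivation k R R → Module.End k M)
    (hadd : ∀ D D' : Derivation k R R, nabla (D + D') = nabla D + nabla D')
    (hsmul : ∀ (r : R) (D : Derivation k R R) (m : M), nabla (r • D) m = r • nabla D m)
    (hLeib : ∀ (D : Derivation k R R) (r : R) (m : M),
      nabla D (r • m) = D r • m + r • nabla D m)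
    (hflat : ∀ D D' : Derivation k R R,
      nabla ⁅D, D'⁆ = nabla D * nabla D' - nabla D' * nabla D)
    (Dpow : Derivation k R R → Derivation k R R)
    (hDpow : ∀ (D : Derivation k R R) (x : R), Dpow D x = (⇑D)^[p] x) :
    (∀ D D' : Derivation k R R,
        (nabla D ^ p - nabla (Dpow D)) * nabla D' =
          nabla D' * (nabla D ^ p - nabla (Dpow D))) ∧
    (∀ D D' : Derivation k R R,
        (nabla D ^ p - nabla (Dpow D)) * (nabla D' ^ p - nabla (Dpow D')) =
          (nabla D' ^ p - nabla (Dpow D')) * (nabla D ^ p - nabla (Dpow D))) := by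
  have key : ∀ D D' : Derivation k R R,
      (nabla D ^ p - nabla (Dpow D)) * nabla D' =
        nabla D' * (nabla D ^ p - nabla (Dpow D)) := by
    intro D D'
    set a := nabla D with ha
    set b := nabla D' with hb
    set c := nabla (Dpow D) with hc
    -- Step 2: iterated ad of `nabla D` corresponds to iterated bracket of `D`.
    have step : ∀ n : ℕ, (fun X => a * X - X * a)^[n] b =
        nabla ((fun E : Derivation k R R => ⁅D, E⁆)^[n] D') := by
      intro n
      induction n with
      | zero => simp [hb]
      | succ n ih =>
        rw [Function.iterate_succ_apply', Function.iterate_succ_apply', ih, hflat]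
    -- Step 1: associative char-p identity in `Module.End k M`.
    have h1 : a ^ p * b - b * a ^ p =
        nabla ((fun E : Derivation k R R => ⁅D, E⁆)^[p] D') := by
      rw [← adPow hp hchar a b, step p]
    -- Step 3: the iterated bracket is `⁅Dpow D, D'⁆`.
    have hco : ∀ n : ℕ,
        (((fun E : Derivation k R R => ⁅D, E⁆)^[n] D' : Derivation k R R) : R →ₗ[k] R) =
          (fun f : Module.End k R => (D : R →ₗ[k] R) * f - f * (D : R →ₗ[k] R))^[n]
            (D' : R →ₗ[k] R) := by
      intro n
      induction n with
      | zero => simp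
      | succ n ih =>
        rw [Function.iterate_succ_apply', Function.iterate_succ_apply', ← ih,
          Derivation.commutator_coe_linear_map, Ring.lie_def]
    have h2 : (fun E : Derivation k R R => ⁅D, E⁆)^[p] D' = ⁅Dpow D, D'⁆ := by
      apply Derivation.ext
      intro x
      have e1 : ((fun E : Derivation k R R => ⁅D, E⁆)^[p] D') x =
          ((((fun E : Derivation k R R => ⁅D, E⁆)^[p] D' : Derivation k R R) :
            R →ₗ[k] R)) x := rfl
      rw [e1, hco p, adPow hp hchar]
      have hDp : ∀ y : R, ((D : R →ₗ[k] R) ^ p) y = (⇑D)^[p] y := by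
        intro y
        rw [Module.End.pow_apply]
        rfl
      rw [Derivation.commutator_apply, LinearMap.sub_apply, Module.End.mul_apply,
        Module.End.mul_apply, hDp, hDp, hDpow, hDpow]
      rfl
    rw [h2, hflat, ← hb, ← hc] at h1
    rw [sub_mul, mul_sub, sub_eq_sub_iff_sub_eq_sub]
    exact h1
  refine ⟨key, fun D D' => ?_⟩
  have c1 : Commute (nabla D ^ p - nabla (Dpow D)) (nabla D') := key D D'
  have c2 : Commute (nabla D ^ p - nabla (Dpow D)) (nabla (Dpow D')) := key D (Dpow D')
  exact ((c1.pow_right p).sub_right c2).eq
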